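/- arXiv:2103.08015 — 2 statements merged into one kernel-verified Lean document; each statement's English description precedes it below -/
import Mathlib

section
/- For every integer n ≥ 1 and every real x, F_{2n+1}(x) = U_n(x) − U_{n-1}(x) + (x²−2x+2)·Σ_{k=0}^{n-1} U_{n-1-k}(x)·F_{2k+1}(x). -/
/-- Chebyshev polynomials of the first kind. -/
def T : ℕ → ℝ → ℝ
  | 0, _ => 1
  | 1, x => x
  | (n+2), x => 2*x*T (n+1) x - T n x

/-- Chebyshev polynomials of the second kind. -/
def U : ℕ → ℝ → ℝ
  | 0, _ => 1
  | 1, x => 2*x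
  | (n+2), x => 2*x*U (n+1) x - U n x

/-- Fibonacci polynomials. -/
def F : ℕ → ℝ → ℝ
  | 0, _ => 0
  | 1, _ => 1
  | (n+2), x => x*F (n+1) x + F n x

/-- Balancing polynomials. -/
def B : ℕ → ℝ → ℝ
  | 0, _ => 0
  | 1, _ => 1
  | (n+2), x => 6*x*B (n+1) x - B n x

/-- Lucas-balancing polynomials. -/
def C : ℕ → ℝ → ℝ
  | 0, _ => 1
  | 1, x => 3*x
  | (n+2), x => 6*x*C (n+1) x - C n x

/-- Lucas numbers. -/
def lucas : ℕ → ℤ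
  | 0 => 2
  | 1 => 1
  | (n+2) => lucas (n+1) + lucas n


lemma F_add4 (m : ℕ) (x : ℝ) : F (m+4) x = (x^2+2) * F (m+2) x - F m x := by
  show F (m+2+2) x = _
  rw [F]
  show x * F (m+1+2) x + _ = _
  rw [F]
  nlinarith [show F (m+2) x = x * F (m+1) x + F m x from rfl]

lemma key (x : ℝ) (n : ℕ) :
    F (2*n+3) x = U (n+1) x - U n x +
      (x^2 - 2*x + 2) * ∑ k ∈ Finset.range (n+1), U (n-k) x * F (2*k+1) x := by
  induction n using Nat.twoStepInduction with
  | zero =>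
    norm_num [F, U]
    ring
  | one =>
    norm_num [F, U, Finset.sum_range_succ]
    ring
  | more n ih1 ih2 =>
    have hF : F (2*(n+2)+3) x = (x^2+2) * F (2*n+5) x - F (2*n+3) x := by
      have h1 : 2*(n+2)+3 = (2*n+3)+4 := by ring
      have h2 : (2*n+3)+2 = 2*n+5 := by ring
      rw [h1, F_add4, h2]
    have hA : ∑ k ∈ Finset.range (n+2), U (n+1-k) x * F (2*k+1) x =
        (∑ k ∈ Finset.range (n+1), U (n+1-k) x * F (2*k+1) x) + F (2*n+3) x := by
      rw [Finset.sum_range_succ, Nat.sub_self]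
      have : 2*(n+1)+1 = 2*n+3 := by ring
      rw [this]
      simp [U]
    have hS : ∑ k ∈ Finset.range (n+1), U (n+2-k) x * F (2*k+1) x
        = 2*x * (∑ k ∈ Finset.range (n+1), U (n+1-k) x * F (2*k+1) x)
        - ∑ k ∈ Finset.range (n+1), U (n-k) x * F (2*k+1) x := by
      rw [Finset.mul_sum, ← Finset.sum_sub_distrib]
      apply Finset.sum_congr rfl
      intro k hk
      have hk' : k ≤ n := Nat.lt_succ_iff.mp (Finset.mem_range.mp hk)
      have e2 : n+2-k = (n-k)+2 := by omega
      have e1 : n+1-k = (n-k)+1 := by omega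
      rw [e2, e1, U]
      ring
    have hU2 : U (n+2) x = 2*x * U (n+1) x - U n x := by rw [U]
    have hU3 : U (n+3) x = 2*x * U (n+2) x - U (n+1) x := by rw [U]
    have hpeel : ∑ k ∈ Finset.range (n+2+1), U (n+2-k) x * F (2*k+1) x
        = (∑ k ∈ Finset.range (n+1), U (n+2-k) x * F (2*k+1) x)
          + 2*x * F (2*n+3) x + F (2*n+5) x := by
      rw [Finset.sum_range_succ, Finset.sum_range_succ]
      have e1 : n+2-(n+1) = 1 := by omega
      have e2 : n+2-(n+2) = 0 := by omega
      have e3 : 2*(n+1)+1 = 2*n+3 := by ring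
      have e4 : 2*(n+2)+1 = 2*n+5 := by ring
      rw [e1, e2, e3, e4]
      simp [U]
    rw [hF, hpeel, hS, hU3, hU2]
    have ih2' : F (2*n+5) x = U (n+2) x - U (n+1) x +
        (x^2 - 2*x + 2) * ((∑ k ∈ Finset.range (n+1), U (n+1-k) x * F (2*k+1) x)
          + F (2*n+3) x) := by
      have e : 2*(n+1)+3 = 2*n+5 := by ring
      rw [← e, ih2, hA]
    rw [hU2] at ih2'
    linear_combination (-1 : ℝ) * ih1 + 2*x*ih2'

theorem stmt8 (n : ℕ) (hn : 1 ≤ n) (x : ℝ) :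
    F (2*n+1) x =
      U n x - U (n-1) x + (x^2 - 2*x + 2) * ∑ k ∈ Finset.range n, U (n-1-k) x * F (2*k+1) x := by
  obtain ⟨m, rfl⟩ : ∃ m, n = m + 1 := ⟨n - 1, by omega⟩
  have h := key x m
  have e1 : 2*m+3 = 2*(m+1)+1 := by ring
  rw [e1] at h
  have e2 : m+1-1 = m := rfl
  rw [h, e2]
end

section
/- For every integer n ≥ 1 and every real x, F_{2n}(x) − x·F_{2n-2}(x) = x·T_{n-1}(x) + (x²−2x+2)·Σ_{k=1}^{n-1} T_{n-1-k}(x)·F_{2k}(x). -/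
lemma Frec (j : ℕ) (x : ℝ) : F (j+4) x = (x^2+2)*F (j+2) x - F j x := by
  show F (j+2+2) x = _
  rw [show j+4 = j+2+2 from rfl]
  simp only [F, show j+3 = j+1+2 from rfl]
  ring

lemma aux (m : ℕ) (x : ℝ) :
    F (2*m+2) x - x * F (2*m) x =
      x * T m x + (x^2 - 2*x + 2) * ∑ k ∈ Finset.Icc 1 m, T (m-k) x * F (2*k) x := by
  induction m using Nat.twoStepInduction with
  | zero => simp [F, T]
  | one => norm_num [F, T, Finset.Icc_self]; ring
  | more m ih1 ih2 =>
    have hs2 : ∑ k ∈ Finset.Icc 1 (m+2), T (m+2-k) x * F (2*k) x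
        = (∑ k ∈ Finset.Icc 1 m, T (m+2-k) x * F (2*k) x)
          + T 1 x * F (2*(m+1)) x + T 0 x * F (2*(m+2)) x := by
      rw [Finset.sum_Icc_succ_top (by omega : 1 ≤ m+2),
          Finset.sum_Icc_succ_top (by omega : 1 ≤ m+1)]
      simp
    have hs1 : ∑ k ∈ Finset.Icc 1 (m+1), T (m+1-k) x * F (2*k) x
        = (∑ k ∈ Finset.Icc 1 m, T (m+1-k) x * F (2*k) x) + T 0 x * F (2*(m+1)) x := by
      rw [Finset.sum_Icc_succ_top (by omega : 1 ≤ m+1)]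
      simp
    have hpt : ∑ k ∈ Finset.Icc 1 m, T (m+2-k) x * F (2*k) x
        = 2*x*(∑ k ∈ Finset.Icc 1 m, T (m+1-k) x * F (2*k) x)
          - ∑ k ∈ Finset.Icc 1 m, T (m-k) x * F (2*k) x := by
      rw [Finset.mul_sum, ← Finset.sum_sub_distrib]
      apply Finset.sum_congr rfl
      intro k hk
      simp only [Finset.mem_Icc] at hk
      rw [show m+2-k = (m-k)+2 by omega, show m+1-k = (m-k)+1 by omega]
      simp only [T]
      ring
    have hT : T (m+2) x = 2*x*T (m+1) x - T m x := by simp [T]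
    have hF1 : F (2*(m+2)+2) x = (x^2+2)*F (2*(m+1)+2) x - F (2*m+2) x := by
      rw [show 2*(m+2)+2 = (2*m+2)+4 by ring, show 2*(m+1)+2 = (2*m+2)+2 by ring]
      exact Frec _ x
    have hF2 : F (2*(m+2)) x = (x^2+2)*F (2*(m+1)) x - F (2*m) x := by
      rw [show 2*(m+2) = (2*m)+4 by ring, show 2*(m+1) = (2*m)+2 by ring]
      exact Frec _ x
    have hF0 : F (2*m+4) x = (x^2+2)*F (2*m+2) x - F (2*m) x := Frec (2*m) x
    rw [hs1] at ih2
    rw [hs2, hpt, hT, hF1, hF2]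
    simp only [T, show 2*(m+1) = 2*m+2 by ring, show 2*(m+2) = 2*m+4 by ring,
      show 2*(m+1)+2 = 2*m+4 by ring, show 2*(m+2)+2 = 2*m+6 by ring] at ih2 ⊢
    linear_combination 2*x*ih2 - ih1 + (x^2-2*x+2)*hF0

theorem stmt11 (n : ℕ) (hn : 1 ≤ n) (x : ℝ) :
    F (2*n) x - x * F (2*n-2) x =
      x * T (n-1) x + (x^2 - 2*x + 2) * ∑ k ∈ Finset.Icc 1 (n-1), T (n-1-k) x * F (2*k) x := by
  obtain ⟨m, rfl⟩ : ∃ m, n = m+1 := ⟨n-1, by omega⟩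
  rw [show 2*(m+1) = 2*m+2 by ring, show 2*m+2-2 = 2*m by omega,
      show m+1-1 = m from rfl]
  exact aux m x
end
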